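/- Let $(\underline{s},\underline{t})\in[p]^k\times[n]^k$ with edge multiplicity profile $(\rho_1,\ldots,\rho_{2k})$. If some edge has odd multiplicity (i.e., $\rho_\ell\geq 1$ for some odd $\ell$), then $\#V(\underline{s},\underline{t})\leq \rho_1+\cdots+\rho_{2k}$. -/

import Mathlib

/-- Cyclic successor on `Fin k`. -/
def cycSucc {k : ℕ} (i : Fin k) : Fin k :=
  ⟨(i.val + 1) % k, Nat.mod_lt _ i.pos⟩

/-- The `2k` edge instances of the bipartite multigraph spanned by `(s,t)`:
for each `i`, the down edge `(s i, t i)` and the up edge `(s (i+1), t i)` (cyclically). -/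
def edges {p n k : ℕ} (s : Fin k → Fin p) (t : Fin k → Fin n) :
    Fin k × Bool → Fin p × Fin n :=
  fun ib => if ib.2 then (s (cycSucc ib.1), t ib.1) else (s ib.1, t ib.1)

/-- Multiplicity of the edge `e` in the multigraph spanned by `(s,t)`. -/
def mult {p n k : ℕ} (s : Fin k → Fin p) (t : Fin k → Fin n) (e : Fin p × Fin n) : ℕ :=
  (Finset.univ.filter (fun j => edges s t j = e)).card

/-- `ρ_ℓ`: the number of distinct edges of multiplicity exactly `ℓ`. -/
def rho {p n k : ℕ} (s : Fin k → Fin p) (t : Fin k → Fin n) (l : ℕ) : ℕ :=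
  ((Finset.univ.image (edges s t)).filter (fun e => mult s t e = l)).card

/-- Total number of distinct vertices: distinct S-nodes plus distinct T-nodes. -/
def numV {p n k : ℕ} (s : Fin k → Fin p) (t : Fin k → Fin n) : ℕ :=
  (Finset.univ.image s).card + (Finset.univ.image t).card

namespace Stmt6

variable {p n k : ℕ}

def widx (k : ℕ) (hk : 0 < k) (j : ℕ) : Fin k := ⟨(j / 2) % k, Nat.mod_lt _ hk⟩

def wseq (s : Fin k → Fin p) (t : Fin k → Fin n) (hk : 0 < k) (j : ℕ) : Fin p ⊕ Fin n :=
  if j % 2 = 0 then Sum.inl (s (widx k hk j)) else Sum.inr (t (widx k hk j))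

def eseq (s : Fin k → Fin p) (t : Fin k → Fin n) (hk : 0 < k) (j : ℕ) : Fin p × Fin n :=
  edges s t (widx k hk j, decide (j % 2 = 1))

variable (s : Fin k → Fin p) (t : Fin k → Fin n) (hk : 0 < k)

lemma endpoints (j : ℕ) :
    (wseq s t hk j = Sum.inl (eseq s t hk j).1 ∧ wseq s t hk (j+1) = Sum.inr (eseq s t hk j).2)
  ∨ (wseq s t hk j = Sum.inr (eseq s t hk j).2 ∧ wseq s t hk (j+1) = Sum.inl (eseq s t hk j).1) := by
  rcases Nat.even_or_odd j with hj | hj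
  · left
    have h0 : j % 2 = 0 := Nat.even_iff.mp hj
    have h1 : (j+1) % 2 = 1 := by omega
    have h2 : (j+1)/2 = j/2 := by omega
    have hw : widx k hk (j+1) = widx k hk j := by
      simp [widx, h2]
    constructor
    · simp [wseq, eseq, edges, h0]
    · simp [wseq, eseq, edges, h0, h1, hw]
  · right
    have h0 : j % 2 = 1 := Nat.odd_iff.mp hj
    have h1 : (j+1) % 2 = 0 := by omega
    have h2 : (j+1)/2 = j/2 + 1 := by omega
    have hw : widx k hk (j+1) = cycSucc (widx k hk j) := by
      apply Fin.ext
      simp [widx, cycSucc, h2, Nat.mod_add_mod]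
    constructor
    · simp [wseq, eseq, edges, h0]
    · simp [wseq, eseq, edges, h0, h1, hw]

lemma wmatch {J j0 : ℕ} (hJ : eseq s t hk J = eseq s t hk j0) :
    (wseq s t hk J = wseq s t hk j0 ∧ wseq s t hk (J+1) = wseq s t hk (j0+1))
  ∨ (wseq s t hk J = wseq s t hk (j0+1) ∧ wseq s t hk (J+1) = wseq s t hk j0) := by
  rcases endpoints s t hk J with ⟨h1, h2⟩ | ⟨h1, h2⟩ <;>
    rcases endpoints s t hk j0 with ⟨h3, h4⟩ | ⟨h3, h4⟩ <;>
    rw [hJ] at h1 h2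
  · exact Or.inl ⟨h1.trans h3.symm, h2.trans h4.symm⟩
  · exact Or.inr ⟨h1.trans h4.symm, h2.trans h3.symm⟩
  · exact Or.inr ⟨h1.trans h4.symm, h2.trans h3.symm⟩
  · exact Or.inl ⟨h1.trans h3.symm, h2.trans h4.symm⟩

lemma wseq_tot : wseq s t hk (2*k) = wseq s t hk 0 := by
  have h0 : (2*k) % 2 = 0 := by omega
  have h1 : (2*k)/2 = k := by omega
  have hw : widx k hk (2*k) = widx k hk 0 := by
    apply Fin.ext
    simp [widx, h1]
  simp [wseq, h0, hw]



noncomputable def fo (s : Fin k → Fin p) (t : Fin k → Fin n) (hk : 0 < k) (v : Fin p ⊕ Fin n) : ℕ :=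
  @dite _ (∃ j, wseq s t hk j = v) (Classical.dec _) (fun h => Nat.find h) (fun _ => 0)

lemma fo_le (j : ℕ) : fo s t hk (wseq s t hk j) ≤ j := by
  have h : ∃ j', wseq s t hk j' = wseq s t hk j := ⟨j, rfl⟩
  simp only [fo, dif_pos h]
  exact Nat.find_le rfl

lemma fo_spec {v : Fin p ⊕ Fin n} (h : ∃ j, wseq s t hk j = v) :
    wseq s t hk (fo s t hk v) = v := by
  simp only [fo, dif_pos h]
  exact Nat.find_spec h

lemma fo_min {v : Fin p ⊕ Fin n} (h : ∃ j, wseq s t hk j = v) {j : ℕ}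
    (hj : j < fo s t hk v) : wseq s t hk j ≠ v := by
  simp only [fo, dif_pos h] at hj
  exact Nat.find_min h hj

lemma fo_zero : fo s t hk (wseq s t hk 0) = 0 := Nat.le_zero.mp (fo_le s t hk 0)

def cnt (s : Fin k → Fin p) (t : Fin k → Fin n) (hk : 0 < k) (e : Fin p × Fin n) (j : ℕ) : ℕ :=
  ((Finset.range j).filter (fun j' => eseq s t hk j' = e)).card

variable (e : Fin p × Fin n)

lemma cnt_succ (j : ℕ) :
    cnt s t hk e (j+1) = cnt s t hk e j + (if eseq s t hk j = e then 1 else 0) := by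
  unfold cnt
  rw [Finset.range_add_one, Finset.filter_insert]
  split
  · rw [Finset.card_insert_of_notMem (by simp)]
  · omega

lemma parity_claim
    (hnew : ∀ j0 : ℕ, (∀ j' < j0, eseq s t hk j' ≠ eseq s t hk j0) →
      fo s t hk (wseq s t hk (j0+1)) = j0 + 1) :
    ∀ j, cnt s t hk e j % 2 = cnt s t hk e (fo s t hk (wseq s t hk j)) % 2 := by
  intro j
  induction j using Nat.strong_induction_on with
  | _ j IH =>
    match j with
    | 0 => rw [fo_zero]
    | J+1 =>
      have hex : ∃ j', eseq s t hk j' = eseq s t hk J := ⟨J, rfl⟩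
      have hj0e : eseq s t hk (Nat.find hex) = eseq s t hk J := Nat.find_spec hex
      set j0 := Nat.find hex with hj0def
      have hj0le : j0 ≤ J := Nat.find_le rfl
      have hfirst : ∀ j' < j0, eseq s t hk j' ≠ eseq s t hk j0 := by
        intro j' hj' hcon
        exact Nat.find_min hex hj' (hcon.trans hj0e)
      have hnew' := hnew j0 hfirst
      have IHJ := IH J (by omega)
      have IHj0 := IH j0 (by omega)
      rcases wmatch s t hk hj0e.symm with ⟨h1, h2⟩ | ⟨h1, h2⟩
      · rw [h2, hnew', cnt_succ, cnt_succ, hj0e]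
        rw [h1] at IHJ
        omega
      · rw [h2, cnt_succ]
        rw [h1, hnew', cnt_succ, hj0e] at IHJ
        omega

lemma cnt_even
    (hnew : ∀ j0 : ℕ, (∀ j' < j0, eseq s t hk j' ≠ eseq s t hk j0) →
      fo s t hk (wseq s t hk (j0+1)) = j0 + 1) :
    cnt s t hk e (2*k) % 2 = 0 := by
  have h := parity_claim s t hk e hnew (2*k)
  rw [wseq_tot, fo_zero] at h
  simpa [cnt] using h



lemma mult_eq_cnt : mult s t e = cnt s t hk e (2*k) := by
  unfold mult cnt
  apply Finset.card_nbij' (fun ib => 2 * ib.1.val + Bool.rec 0 1 ib.2)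
    (fun m => (widx k hk m, decide (m % 2 = 1)))
  · rintro ⟨i, b⟩ hib
    simp only [Finset.mem_coe, Finset.mem_filter, Finset.mem_univ, true_and] at hib
    have hlt : i.val < k := i.isLt
    have heq : eseq s t hk (2 * i.val + Bool.rec 0 1 b) = edges s t (i, b) := by
      have hdiv : (2 * i.val + Bool.rec 0 1 b) / 2 = i.val := by cases b <;> simp <;> omega
      have hmod : ((2 * i.val + Bool.rec 0 1 b) % 2 = 1) = (b = true) := by
        cases b <;> simp <;> omega
      have hwi : widx k hk (2 * i.val + Bool.rec 0 1 b) = i := by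
        apply Fin.ext
        simp [widx, hdiv, Nat.mod_eq_of_lt hlt]
      unfold eseq
      rw [hwi]
      congr 1
      cases b <;> simp <;> omega
    simp only [Finset.mem_coe, Finset.mem_filter, Finset.mem_range]
    refine ⟨by cases b <;> simp <;> omega, heq.trans hib⟩
  · intro m hm
    simp only [Finset.mem_coe, Finset.mem_filter, Finset.mem_range] at hm
    simp only [Finset.mem_coe, Finset.mem_filter, Finset.mem_univ, true_and]
    exact hm.2
  · rintro ⟨i, b⟩ hib
    have hlt : i.val < k := i.isLt
    have hdiv : (2 * i.val + Bool.rec 0 1 b) / 2 = i.val := by cases b <;> simp <;> omega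
    ext
    · simp [widx, hdiv, Nat.mod_eq_of_lt hlt]
    · cases b <;> simp <;> omega
  · intro m hm
    simp only [Finset.mem_coe, Finset.mem_filter, Finset.mem_range] at hm
    have hm2 : m / 2 < k := by omega
    have : (m / 2) % k = m / 2 := Nat.mod_eq_of_lt hm2
    simp only [widx, this]
    by_cases h : m % 2 = 1 <;> simp [h] <;> omega



lemma wseq_even (i : Fin k) : wseq s t hk (2 * i.val) = Sum.inl (s i) := by
  have h0 : (2 * i.val) % 2 = 0 := by omega
  have hw : widx k hk (2 * i.val) = i := by
    apply Fin.ext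
    have : (2 * i.val) / 2 = i.val := by omega
    simp [widx, this, Nat.mod_eq_of_lt i.isLt]
  simp [wseq, h0, hw]

lemma wseq_odd (i : Fin k) : wseq s t hk (2 * i.val + 1) = Sum.inr (t i) := by
  have h0 : (2 * i.val + 1) % 2 = 1 := by omega
  have hw : widx k hk (2 * i.val + 1) = i := by
    apply Fin.ext
    have : (2 * i.val + 1) / 2 = i.val := by omega
    simp [widx, this, Nat.mod_eq_of_lt i.isLt]
  simp [wseq, h0, hw]

lemma eseq_mem (j : ℕ) : eseq s t hk j ∈ Finset.univ.image (edges s t) :=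
  Finset.mem_image.mpr ⟨(widx k hk j, decide (j % 2 = 1)), Finset.mem_univ _, rfl⟩

end Stmt6


/-- if some edge has odd multiplicity, then `#V(s,t) ≤ ρ₁ + ⋯ + ρ_{2k}`. -/
theorem stmt6 (p n k : ℕ) (s : Fin k → Fin p) (t : Fin k → Fin n)
    (hodd : ∃ l, Odd l ∧ 1 ≤ rho s t l) :
    numV s t ≤ ∑ l ∈ Finset.Icc 1 (2 * k), rho s t l := by
  classical
  obtain ⟨l, hlodd, hlrho⟩ := hodd
  rcases Nat.eq_zero_or_pos k with rfl | hk
  · exfalso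
    simp [rho, Finset.univ_eq_empty] at hlrho
  open Stmt6 in
  -- abbreviations
  set E := Finset.univ.image (edges s t) with hE
  -- the sum of the rho's is the number of distinct edges
  have hmultIcc : ∀ e ∈ E, mult s t e ∈ Finset.Icc 1 (2 * k) := by
    intro e he
    rw [Finset.mem_Icc]
    constructor
    · obtain ⟨ib, _, hib⟩ := Finset.mem_image.mp he
      have : ib ∈ Finset.univ.filter (fun j => edges s t j = e) := by
        simp [hib]
      have := Finset.card_pos.mpr ⟨ib, this⟩
      unfold mult; omega
    · calc mult s t e ≤ (Finset.univ : Finset (Fin k × Bool)).card :=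
            Finset.card_filter_le _ _
        _ = 2 * k := by simp [Fintype.card_prod]; ring
  have hsum : ∑ l ∈ Finset.Icc 1 (2 * k), rho s t l = E.card := by
    rw [Finset.card_eq_sum_card_fiberwise hmultIcc]
    rfl
  rw [hsum]
  -- used vertices
  set usedV := (Finset.univ.image s).map ⟨Sum.inl, Sum.inl_injective⟩ ∪
      (Finset.univ.image t).map ⟨Sum.inr, Sum.inr_injective⟩ with husedV
  have husedcard : usedV.card = numV s t := by
    rw [husedV, Finset.card_union_of_disjoint, Finset.card_map, Finset.card_map, numV]
    rw [Finset.disjoint_left]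
    rintro a ha hb
    obtain ⟨x, _, rfl⟩ := Finset.mem_map.mp ha
    obtain ⟨y, _, hy⟩ := Finset.mem_map.mp hb
    exact absurd hy (by simp)
  have hmemw : ∀ v ∈ usedV, ∃ j, wseq s t hk j = v := by
    intro v hv
    rw [husedV, Finset.mem_union] at hv
    rcases hv with hv | hv
    · obtain ⟨x, hx, rfl⟩ := Finset.mem_map.mp hv
      obtain ⟨i, _, rfl⟩ := Finset.mem_image.mp hx
      exact ⟨2 * i.val, wseq_even s t hk i⟩
    · obtain ⟨x, hx, rfl⟩ := Finset.mem_map.mp hv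
      obtain ⟨i, _, rfl⟩ := Finset.mem_image.mp hx
      exact ⟨2 * i.val + 1, wseq_odd s t hk i⟩
  have hw0 : wseq s t hk 0 ∈ usedV := by
    rw [husedV, Finset.mem_union]
    left
    rw [Finset.mem_map]
    refine ⟨s (widx k hk 0), Finset.mem_image_of_mem s (Finset.mem_univ _), ?_⟩
    simp [wseq]
  set A := usedV.erase (wseq s t hk 0) with hA
  have hAcard : A.card + 1 = usedV.card := Finset.card_erase_add_one hw0
  have hAsub : A ⊆ usedV := Finset.erase_subset _ _
  set φ : Fin p ⊕ Fin n → Fin p × Fin n :=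
      fun v => eseq s t hk (fo s t hk v - 1) with hφ
  have hf1 : ∀ v ∈ A, 1 ≤ fo s t hk v := by
    intro v hv
    by_contra h
    have h0 : fo s t hk v = 0 := by omega
    have := fo_spec s t hk (hmemw v (hAsub hv))
    rw [h0] at this
    exact (Finset.ne_of_mem_erase hv) this.symm
  have hφE : ∀ v ∈ A, φ v ∈ E := fun v _ => eseq_mem s t hk _
  have hφinj : Set.InjOn φ A := by
    intro u hu v hv huv
    simp only [hφ] at huv
    have hu1 : fo s t hk u - 1 + 1 = fo s t hk u := by have := hf1 u hu; omega
    have hv1 : fo s t hk v - 1 + 1 = fo s t hk v := by have := hf1 v hv; omega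
    have huspec := fo_spec s t hk (hmemw u (hAsub hu))
    have hvspec := fo_spec s t hk (hmemw v (hAsub hv))
    rcases lt_trichotomy (fo s t hk u) (fo s t hk v) with hlt | heq | hgt
    · rcases wmatch s t hk huv with ⟨h1, h2⟩ | ⟨h1, h2⟩
      · rw [hu1, hv1] at h2
        rw [← huspec, ← hvspec, h2]
      · exfalso
        rw [hv1] at h1
        rw [hvspec] at h1
        exact fo_min s t hk (hmemw v (hAsub hv)) (by omega) h1
    · rw [← huspec, ← hvspec, heq]
    · rcases wmatch s t hk huv.symm with ⟨h1, h2⟩ | ⟨h1, h2⟩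
      · rw [hv1, hu1] at h2
        rw [← huspec, ← hvspec, h2]
      · exfalso
        rw [hu1] at h1
        rw [huspec] at h1
        exact fo_min s t hk (hmemw u (hAsub hu)) (by omega) h1
  have hcard1 : A.card ≤ E.card := Finset.card_le_card_of_injOn φ hφE hφinj
  -- main inequality by contradiction
  by_contra hcon
  push_neg at hcon
  have hEA : E.card ≤ A.card := by
    rw [← husedcard] at hcon
    omega
  have himg : A.image φ = E := by
    apply Finset.eq_of_subset_of_card_le
    · intro e he
      obtain ⟨v, hv, rfl⟩ := Finset.mem_image.mp he
      exact hφE v hv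
    · rw [Finset.card_image_of_injOn hφinj]
      exact hEA
  have hnew : ∀ j0 : ℕ, (∀ j' < j0, eseq s t hk j' ≠ eseq s t hk j0) →
      fo s t hk (wseq s t hk (j0+1)) = j0 + 1 := by
    intro j0 hfirst
    have he : eseq s t hk j0 ∈ E := eseq_mem s t hk j0
    rw [← himg] at he
    obtain ⟨v, hvA, hφv⟩ := Finset.mem_image.mp he
    simp only [hφ] at hφv
    have hm1 : fo s t hk v - 1 + 1 = fo s t hk v := by have := hf1 v hvA; omega
    have hj0m : j0 ≤ fo s t hk v - 1 := by
      by_contra h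
      exact hfirst _ (by omega) hφv
    have hvm : wseq s t hk (fo s t hk v - 1 + 1) = v := by
      rw [hm1]; exact fo_spec s t hk (hmemw v (hAsub hvA))
    rcases wmatch s t hk hφv with ⟨h1, h2⟩ | ⟨h1, h2⟩
    · rcases eq_or_lt_of_le hj0m with heqm | hltm
      · have hgoal : wseq s t hk (j0+1) = v := by rw [heqm]; exact hvm
        rw [hgoal]
        omega
      · exfalso
        rw [hvm] at h2
        exact fo_min s t hk (hmemw v (hAsub hvA)) (by omega) h2.symm
    · exfalso
      rw [hvm] at h2
      exact fo_min s t hk (hmemw v (hAsub hvA)) (by omega) h2.symm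
  -- parity contradiction
  obtain ⟨e, hef⟩ := Finset.card_pos.mp (by rw [rho] at hlrho; omega :
      0 < ((Finset.univ.image (edges s t)).filter (fun e => mult s t e = l)).card)
  rw [Finset.mem_filter] at hef
  have heven := cnt_even s t hk e hnew
  rw [← mult_eq_cnt s t hk e] at heven
  rw [hef.2] at heven
  rw [Nat.odd_iff] at hlodd
  omega
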